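/- Let d ≥ 2, p, q ∈ [0,1], and γ ≥ 1. For the Werner states ω^q and ω^p on ℂ^d ⊗ ℂ^d, the hockey-stick divergence satisfies E_γ(ω^q‖ω^p) = max{0, q − γp, (1−q) − γ(1−p)}. -/

import Mathlib

noncomputable section
open Matrix ComplexOrder

/-- Bipartite complex matrices on ℂ^d ⊗ ℂ^d. -/
abbrev BMat (d : ℕ) := Matrix (Fin d × Fin d) (Fin d × Fin d) ℂ

/-- The swap operator `F = Σ_{i,j} |i⟩⟨j| ⊗ |j⟩⟨i|`. -/
def swapOp (d : ℕ) : BMat d :=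
  fun p q => if p.1 = q.2 ∧ p.2 = q.1 then 1 else 0

/-- The symmetric Werner extreme state `Θ = (I + F)/(d(d+1))`. -/
def wΘ (d : ℕ) : BMat d := ((d : ℂ) * ((d : ℂ) + 1))⁻¹ • (1 + swapOp d)

/-- The antisymmetric Werner extreme state `Θ⊥ = (I − F)/(d(d−1))`. -/
def wΘperp (d : ℕ) : BMat d := ((d : ℂ) * ((d : ℂ) - 1))⁻¹ • (1 - swapOp d)

/-- The Werner state `ω^p = pΘ + (1−p)Θ⊥`. -/
def werner (d : ℕ) (p : ℝ) : BMat d := (p : ℂ) • wΘ d + ((1 - p : ℝ) : ℂ) • wΘperp d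

/-- Hockey-stick divergence (all measurements) for γ ≥ 1. -/
def Eg {d : ℕ} (γ : ℝ) (ρ σ : BMat d) : ℝ :=
  sSup {x : ℝ | ∃ M : BMat d, M.PosSemidef ∧ ((1 : BMat d) - M).PosSemidef ∧
    x = ((M * (ρ - (γ : ℂ) • σ)).trace).re}

lemma F_mul_F (d : ℕ) : swapOp d * swapOp d = 1 := by
  ext ⟨i,j⟩ ⟨k,l⟩
  simp only [Matrix.mul_apply, swapOp, Matrix.one_apply, Fintype.sum_prod_type]
  rw [Finset.sum_eq_single j, Finset.sum_eq_single i]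
  · simp [Prod.ext_iff]
    aesop
  · intro x _ hx; aesop
  · simp
  · intro x _ hx
    apply Finset.sum_eq_zero; intro y _; aesop
  · simp

lemma F_conjT (d : ℕ) : (swapOp d)ᴴ = swapOp d := by
  ext p q
  simp only [Matrix.conjTranspose_apply, swapOp]
  split_ifs with h1 h2 h2 <;> simp_all <;> aesop

lemma F_trace (d : ℕ) : (swapOp d).trace = (d : ℂ) := by
  simp only [Matrix.trace, Matrix.diag, swapOp, Fintype.sum_prod_type]
  simp [Finset.sum_ite_eq, eq_comm, and_self]

lemma one_trace (d : ℕ) : (1 : BMat d).trace = (d : ℂ) * d := by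
  rw [Matrix.trace_one]
  simp [Fintype.card_prod]

lemma psd_smul {n : Type*} [Fintype n] {A : Matrix n n ℂ} (hA : A.PosSemidef)
    {c : ℂ} (hc : 0 ≤ c) : (c • A).PosSemidef := by
  have hcr : star c = c := by
    rw [Complex.star_def, Complex.conj_eq_iff_im]
    exact ((Complex.nonneg_iff.mp hc).2).symm
  refine Matrix.PosSemidef.of_dotProduct_mulVec_nonneg ?_ (fun x => ?_)
  · unfold Matrix.IsHermitian
    rw [Matrix.conjTranspose_smul, hcr, hA.1]
  · rw [Matrix.smul_mulVec, dotProduct_smul]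
    exact mul_nonneg hc (hA.dotProduct_mulVec_nonneg x)

lemma psd_trace_nonneg {n : Type*} [Fintype n] [DecidableEq n] {A : Matrix n n ℂ}
    (hA : A.PosSemidef) : 0 ≤ A.trace := by
  apply Finset.sum_nonneg
  intro i _
  have := hA.dotProduct_mulVec_nonneg (Pi.single i 1)
  simpa [dotProduct, Matrix.mulVec, Pi.single_apply, Finset.sum_ite_eq,
    Matrix.diag] using this

lemma psd_trace_mul_nonneg {n : Type*} [Fintype n] [DecidableEq n]
    {A B : Matrix n n ℂ} (hA : A.PosSemidef) (hB : B.PosSemidef) :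
    0 ≤ (A * B).trace := by
  open scoped MatrixOrder in
  obtain ⟨C, rfl⟩ := CStarAlgebra.nonneg_iff_eq_star_mul_self.mp hB.nonneg
  rw [Matrix.star_eq_conjTranspose, ← mul_assoc, Matrix.trace_mul_comm, ← mul_assoc]
  have hpsd : (C * A * Cᴴ).PosSemidef := hA.mul_mul_conjTranspose_same C
  exact psd_trace_nonneg hpsd

lemma sq_one_add (d : ℕ) : (1 + swapOp d) * (1 + swapOp d) = (1 + swapOp d) + (1 + swapOp d) := by
  simp only [add_mul, mul_add, one_mul, mul_one, F_mul_F]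
  abel

lemma sq_one_sub (d : ℕ) : (1 - swapOp d) * (1 - swapOp d) = (1 - swapOp d) + (1 - swapOp d) := by
  simp only [sub_mul, mul_sub, one_mul, mul_one, F_mul_F]
  abel

lemma mul_add_sub (d : ℕ) : (1 + swapOp d) * (1 - swapOp d) = 0 := by
  simp only [add_mul, mul_sub, one_mul, mul_one, F_mul_F]
  abel

lemma mul_sub_add (d : ℕ) : (1 - swapOp d) * (1 + swapOp d) = 0 := by
  simp only [sub_mul, mul_add, one_mul, mul_one, F_mul_F]
  abel

lemma conjT_one_add (d : ℕ) : (1 + swapOp d)ᴴ = 1 + swapOp d := by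
  rw [Matrix.conjTranspose_add, Matrix.conjTranspose_one, F_conjT]

lemma conjT_one_sub (d : ℕ) : (1 - swapOp d)ᴴ = 1 - swapOp d := by
  rw [Matrix.conjTranspose_sub, Matrix.conjTranspose_one, F_conjT]

lemma half_nonneg : (0 : ℂ) ≤ 2⁻¹ := by
  rw [show ((2:ℂ))⁻¹ = ((2⁻¹ : ℝ) : ℂ) by norm_num]
  exact Complex.zero_le_real.mpr (by norm_num)

lemma psd_one_add (d : ℕ) : (1 + swapOp d).PosSemidef := by
  have h := Matrix.posSemidef_conjTranspose_mul_self (1 + swapOp d)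
  rw [conjT_one_add, sq_one_add] at h
  have h2 := psd_smul h half_nonneg
  rwa [smul_add, ← add_smul, show ((2:ℂ))⁻¹ + 2⁻¹ = 1 by norm_num, one_smul] at h2

lemma psd_one_sub (d : ℕ) : (1 - swapOp d).PosSemidef := by
  have h := Matrix.posSemidef_conjTranspose_mul_self (1 - swapOp d)
  rw [conjT_one_sub, sq_one_sub] at h
  have h2 := psd_smul h half_nonneg
  rwa [smul_add, ← add_smul, show ((2:ℂ))⁻¹ + 2⁻¹ = 1 by norm_num, one_smul] at h2

lemma psd_wΘ (d : ℕ) : (wΘ d).PosSemidef := by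
  apply psd_smul (psd_one_add d)
  rw [show ((d:ℂ) * ((d:ℂ)+1))⁻¹ = ((((d:ℝ) * ((d:ℝ)+1))⁻¹ : ℝ) : ℂ) by push_cast; ring]
  exact Complex.zero_le_real.mpr (by positivity)

lemma psd_wΘperp (d : ℕ) (hd : 2 ≤ d) : (wΘperp d).PosSemidef := by
  apply psd_smul (psd_one_sub d)
  rw [show ((d:ℂ) * ((d:ℂ)-1))⁻¹ = ((((d:ℝ) * ((d:ℝ)-1))⁻¹ : ℝ) : ℂ) by push_cast; ring]
  have hd1 : (1:ℝ) ≤ (d:ℝ) := by exact_mod_cast Nat.one_le_of_lt hd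
  exact Complex.zero_le_real.mpr
    (inv_nonneg.mpr (mul_nonneg (Nat.cast_nonneg d) (by linarith)))

section traces

lemma dC_ne (d : ℕ) (hd : 2 ≤ d) : (d:ℂ) ≠ 0 := Nat.cast_ne_zero.mpr (by omega)

lemma dC1_ne (d : ℕ) : (d:ℂ) + 1 ≠ 0 := by
  have h : ((d:ℂ) + 1) = ((d+1 : ℕ) : ℂ) := by push_cast; ring
  rw [h]
  exact Nat.cast_ne_zero.mpr (Nat.succ_ne_zero d)

lemma dCm1_ne (d : ℕ) (hd : 2 ≤ d) : (d:ℂ) - 1 ≠ 0 :=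
  sub_ne_zero.mpr (by exact_mod_cast (by omega : d ≠ 1))

lemma tr_one_add (d : ℕ) : (1 + swapOp d).trace = (d:ℂ) * d + d := by
  rw [Matrix.trace_add, one_trace, F_trace]

lemma tr_one_sub (d : ℕ) : (1 - swapOp d).trace = (d:ℂ) * d - d := by
  rw [Matrix.trace_sub, one_trace, F_trace]

lemma tr_wΘ (d : ℕ) (hd : 2 ≤ d) : (wΘ d).trace = 1 := by
  rw [wΘ, Matrix.trace_smul, tr_one_add, smul_eq_mul,
    show (d:ℂ) * d + d = (d:ℂ) * ((d:ℂ) + 1) by ring]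
  exact inv_mul_cancel₀ (mul_ne_zero (dC_ne d hd) (dC1_ne d))

lemma tr_wΘperp (d : ℕ) (hd : 2 ≤ d) : (wΘperp d).trace = 1 := by
  rw [wΘperp, Matrix.trace_smul, tr_one_sub, smul_eq_mul,
    show (d:ℂ) * d - d = (d:ℂ) * ((d:ℂ) - 1) by ring]
  exact inv_mul_cancel₀ (mul_ne_zero (dC_ne d hd) (dCm1_ne d hd))

lemma tr_add_Θ (d : ℕ) (hd : 2 ≤ d) : ((1 + swapOp d) * wΘ d).trace = 2 := by
  rw [wΘ, Matrix.mul_smul, sq_one_add, Matrix.trace_smul, Matrix.trace_add,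
    tr_one_add, smul_eq_mul,
    show ((d:ℂ) * d + d) + ((d:ℂ) * d + d) = ((d:ℂ) * ((d:ℂ) + 1)) * 2 by ring,
    ← mul_assoc, inv_mul_cancel₀ (mul_ne_zero (dC_ne d hd) (dC1_ne d)), one_mul]

lemma tr_add_Θperp (d : ℕ) : ((1 + swapOp d) * wΘperp d).trace = 0 := by
  rw [wΘperp, Matrix.mul_smul, mul_add_sub, Matrix.trace_smul, Matrix.trace_zero,
    smul_zero]

lemma tr_sub_Θ (d : ℕ) : ((1 - swapOp d) * wΘ d).trace = 0 := by
  rw [wΘ, Matrix.mul_smul, mul_sub_add, Matrix.trace_smul, Matrix.trace_zero,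
    smul_zero]

lemma tr_sub_Θperp (d : ℕ) (hd : 2 ≤ d) : ((1 - swapOp d) * wΘperp d).trace = 2 := by
  rw [wΘperp, Matrix.mul_smul, sq_one_sub, Matrix.trace_smul, Matrix.trace_add,
    tr_one_sub, smul_eq_mul,
    show ((d:ℂ) * d - d) + ((d:ℂ) * d - d) = ((d:ℂ) * ((d:ℂ) - 1)) * 2 by ring,
    ← mul_assoc, inv_mul_cancel₀ (mul_ne_zero (dC_ne d hd) (dCm1_ne d hd)), one_mul]

end traces

/-- Hockey-stick divergence for Werner states. -/
theorem stmt_8 (d : ℕ) (hd : 2 ≤ d) (p q : ℝ)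
    (hp : p ∈ Set.Icc (0 : ℝ) 1) (hq : q ∈ Set.Icc (0 : ℝ) 1)
    (γ : ℝ) (hγ : 1 ≤ γ) :
    Eg γ (werner d q) (werner d p) =
      max 0 (max (q - γ * p) ((1 - q) - γ * (1 - p))) := by
  obtain ⟨hp0, hp1⟩ := hp
  obtain ⟨hq0, hq1⟩ := hq
  set a : ℝ := q - γ * p with ha_def
  set b : ℝ := (1 - q) - γ * (1 - p) with hb_def
  have hab : a + b ≤ 0 := by
    have : a + b = 1 - γ := by rw [ha_def, hb_def]; ring
    linarith
  have hD : werner d q - (γ:ℂ) • werner d p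
      = ((a : ℝ) : ℂ) • wΘ d + ((b : ℝ) : ℂ) • wΘperp d := by
    simp only [werner, ha_def, hb_def]
    push_cast
    module
  have htr : ∀ M : BMat d, (M * (werner d q - (γ:ℂ) • werner d p)).trace
      = (a : ℂ) * (M * wΘ d).trace + (b : ℂ) * (M * wΘperp d).trace := by
    intro M
    rw [hD, mul_add, Matrix.mul_smul, Matrix.mul_smul, Matrix.trace_add,
      Matrix.trace_smul, Matrix.trace_smul, smul_eq_mul, smul_eq_mul]
  apply IsGreatest.csSup_eq
  constructor
  · -- membership
    rcases le_or_gt a 0 with hA | hA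
    · rcases le_or_gt b 0 with hB | hB
      · -- value 0, M = 0
        refine ⟨0, Matrix.PosSemidef.zero, by rw [sub_zero]; exact Matrix.PosSemidef.one, ?_⟩
        rw [Matrix.zero_mul, Matrix.trace_zero]
        simp [max_eq_left (max_le hA hB)]
      · -- value b, M = 2⁻¹ • (1 - F)
        refine ⟨(2⁻¹ : ℂ) • (1 - swapOp d), psd_smul (psd_one_sub d) half_nonneg, ?_, ?_⟩
        · have h1M : (1 : BMat d) - (2⁻¹ : ℂ) • (1 - swapOp d)
              = (2⁻¹ : ℂ) • (1 + swapOp d) := by module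
          rw [h1M]; exact psd_smul (psd_one_add d) half_nonneg
        · rw [htr, Matrix.smul_mul, Matrix.smul_mul, Matrix.trace_smul, Matrix.trace_smul,
            tr_sub_Θ, tr_sub_Θperp d hd]
          have hmax : max 0 (max a b) = b := by
            rw [max_eq_right (le_of_lt (lt_of_le_of_lt hA hB)),
              max_eq_right (le_of_lt hB)]
          rw [hmax]
          simp
    · -- a > 0, value a, M = 2⁻¹ • (1 + F)
      have hB : b < 0 := by linarith
      refine ⟨(2⁻¹ : ℂ) • (1 + swapOp d), psd_smul (psd_one_add d) half_nonneg, ?_, ?_⟩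
      · have h1M : (1 : BMat d) - (2⁻¹ : ℂ) • (1 + swapOp d)
            = (2⁻¹ : ℂ) • (1 - swapOp d) := by module
        rw [h1M]; exact psd_smul (psd_one_sub d) half_nonneg
      · rw [htr, Matrix.smul_mul, Matrix.smul_mul, Matrix.trace_smul, Matrix.trace_smul,
          tr_add_Θ d hd, tr_add_Θperp]
        have hmax : max 0 (max a b) = a := by
          rw [max_eq_left (le_of_lt (lt_trans hB hA)), max_eq_right (le_of_lt hA)]
        rw [hmax]
        simp
  · -- upper bound
    rintro x ⟨M, hM, hIM, rfl⟩
    rw [htr]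
    set s : ℂ := (M * wΘ d).trace with hs_def
    set t : ℂ := (M * wΘperp d).trace with ht_def
    have hs0 : 0 ≤ s := psd_trace_mul_nonneg hM (psd_wΘ d)
    have ht0 : 0 ≤ t := psd_trace_mul_nonneg hM (psd_wΘperp d hd)
    have hs1 : 0 ≤ (1 : ℂ) - s := by
      have h := psd_trace_mul_nonneg hIM (psd_wΘ d)
      rwa [Matrix.sub_mul, Matrix.one_mul, Matrix.trace_sub, tr_wΘ d hd, ← hs_def] at h
    have ht1 : 0 ≤ (1 : ℂ) - t := by
      have h := psd_trace_mul_nonneg hIM (psd_wΘperp d hd)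
      rwa [Matrix.sub_mul, Matrix.one_mul, Matrix.trace_sub, tr_wΘperp d hd, ← ht_def] at h
    have hsr0 : 0 ≤ s.re := (Complex.nonneg_iff.mp hs0).1
    have htr0 : 0 ≤ t.re := (Complex.nonneg_iff.mp ht0).1
    have hsr1 : s.re ≤ 1 := by
      have := (Complex.nonneg_iff.mp hs1).1
      simp only [Complex.sub_re, Complex.one_re] at this
      linarith
    have htr1 : t.re ≤ 1 := by
      have := (Complex.nonneg_iff.mp ht1).1
      simp only [Complex.sub_re, Complex.one_re] at this
      linarith
    have hre : ((a : ℂ) * s + (b : ℂ) * t).re = a * s.re + b * t.re := by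
      simp [Complex.add_re, Complex.mul_re]
    rw [hre]
    rcases le_or_gt a 0 with hA | hA
    · rcases le_or_gt b 0 with hB | hB
      · have h1 : a * s.re + b * t.re ≤ 0 := by nlinarith
        exact le_trans h1 (le_max_left 0 _)
      · have h1 : a * s.re + b * t.re ≤ b := by nlinarith
        exact le_trans h1 (le_trans (le_max_right a b) (le_max_right 0 _))
    · have hB : b < 0 := by linarith
      have h1 : a * s.re + b * t.re ≤ a := by nlinarith
      exact le_trans h1 (le_trans (le_max_left a b) (le_max_right 0 _))
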